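/- Let q ∈ ℤ[x] be monic of degree g ≥ 1. If every complex root of sym(q) is a root of unity, then every complex root of q has absolute value at most 2. -/

import Mathlib

open Polynomial

/-- For a polynomial `q = a_g x^g + … + a_0` of degree `g`,
`sym(q) = ∑ a_i x^{g-i} (x²+1)^i`, i.e. `sym(q)(x) = x^g · q(x + 1/x)`. -/
noncomputable def symPoly (q : Polynomial ℤ) : Polynomial ℤ :=
  ∑ i ∈ Finset.range (q.natDegree + 1),
    Polynomial.C (q.coeff i) * Polynomial.X ^ (q.natDegree - i) * (Polynomial.X ^ 2 + 1) ^ i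

theorem roots_bounded_of_sym_roots_of_unity (q : Polynomial ℤ) (g : ℕ) (hg : 1 ≤ g)
    (hq : q.Monic) (hdeg : q.natDegree = g)
    (h : ∀ ζ : ℂ, Polynomial.aeval ζ (symPoly q) = 0 → ∃ n : ℕ, 1 ≤ n ∧ ζ ^ n = 1) :
    ∀ z : ℂ, Polynomial.aeval z q = 0 → ‖z‖ ≤ 2 := by
  intro z hz
  -- find w with w² - z w + 1 = 0
  obtain ⟨w, hw⟩ : ∃ w : ℂ, w ^ 2 - z * w + 1 = 0 := by
    have hd : (0 : WithBot ℕ) < (X ^ 2 - C z * X + 1 : ℂ[X]).degree := by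
      have : (X ^ 2 - C z * X + 1 : ℂ[X]).degree = 2 := by
        compute_degree!
      rw [this]; norm_num
    obtain ⟨w, hw⟩ := Complex.exists_root hd
    refine ⟨w, ?_⟩
    simpa [IsRoot, eval_add, eval_sub, eval_pow, eval_mul] using hw
  have hw2 : w ^ 2 + 1 = z * w := by linear_combination hw
  -- w is a root of symPoly q
  have hsym : Polynomial.aeval w (symPoly q) = 0 := by
    have : Polynomial.aeval w (symPoly q)
        = ∑ i ∈ Finset.range (q.natDegree + 1),
            (q.coeff i : ℂ) * w ^ (q.natDegree - i) * (w ^ 2 + 1) ^ i := by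
      simp [symPoly]
    rw [this]
    have hq0 : Polynomial.aeval z q
        = ∑ i ∈ Finset.range (q.natDegree + 1), (q.coeff i : ℂ) * z ^ i := by
      rw [Polynomial.aeval_eq_sum_range]
      simp [mul_comm]
    have : ∑ i ∈ Finset.range (q.natDegree + 1),
        (q.coeff i : ℂ) * w ^ (q.natDegree - i) * (w ^ 2 + 1) ^ i
        = w ^ q.natDegree * ∑ i ∈ Finset.range (q.natDegree + 1), (q.coeff i : ℂ) * z ^ i := by
      rw [Finset.mul_sum]
      apply Finset.sum_congr rfl
      intro i hi
      have hi' : i ≤ q.natDegree := Nat.lt_succ_iff.mp (Finset.mem_range.mp hi)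
      rw [hw2, mul_pow]
      have hpow : w ^ (q.natDegree - i) * w ^ i = w ^ q.natDegree := by
        rw [← pow_add, Nat.sub_add_cancel hi']
      linear_combination ((q.coeff i : ℂ) * z ^ i) * hpow
    rw [this, ← hq0, hz, mul_zero]
  obtain ⟨n, hn1, hwn⟩ := h w hsym
  have hwne : w ≠ 0 := by
    intro h0
    rw [h0, zero_pow (by omega)] at hwn
    exact zero_ne_one hwn
  have habs : ‖w‖ = 1 := by
    have h1 : ‖w‖ ^ n = 1 := by
      rw [← norm_pow, hwn, norm_one]
    have hnn := norm_nonneg w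
    rcases lt_trichotomy ‖w‖ 1 with h2 | h2 | h2
    · have := pow_lt_one₀ hnn h2 (by omega : n ≠ 0)
      rw [h1] at this; linarith
    · exact h2
    · have := one_lt_pow₀ h2 (by omega : n ≠ 0)
      rw [h1] at this; linarith
  have hz' : z = w + w⁻¹ := by
    field_simp
    linear_combination -hw
  rw [hz']
  calc ‖w + w⁻¹‖ ≤ ‖w‖ + ‖w⁻¹‖ := norm_add_le _ _
    _ = 2 := by rw [norm_inv, habs]; norm_num
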